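/- arXiv:0804.4187 — 2 statements merged into one kernel-verified Lean document; each statement's English description precedes it below -/
import Mathlib

section
/- Let (X_i^{(n)}) be a row-independent triangular array of Bernoulli(p_{i,n}) variables, S_n = ∑_{i=1}^n X_i^{(n)}, and m_n = ∑_{i=1}^n p_{i,n}. If limsup_n m_n = ∞, then S_n does not converge in distribution to any real-valued random variable. -/
open MeasureTheory ProbabilityTheory Filter

/-- If the mean sums `m n = ∑ i < n, p n i` of a row-independent triangular array of
Bernoulli variables satisfy `limsup m n = ∞` (i.e. `m` is frequently above any level),
then `S n = ∑ i < n, X n i` does not converge in distribution to any real-valued random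
variable. -/
theorem stmt11 {Ω : Type*} [MeasurableSpace Ω] (μ : Measure Ω) [IsProbabilityMeasure μ]
    (X : ℕ → ℕ → Ω → ℝ) (p : ℕ → ℕ → ℝ)
    (hmeas : ∀ n i, Measurable (X n i))
    (hval : ∀ n i, ∀ᵐ ω ∂μ, X n i ω = 0 ∨ X n i ω = 1)
    (hp : ∀ n i, μ {ω | X n i ω = 1} = ENNReal.ofReal (p n i))
    (hind : ∀ n, iIndepFun (fun i : Fin n => X n i) μ)
    (hm : ∀ C : ℝ, ∃ᶠ n in atTop, C < ∑ i ∈ Finset.range n, p n i) :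
    ¬ ∃ ν : Measure ℝ, IsProbabilityMeasure ν ∧
        ∀ f : BoundedContinuousFunction ℝ ℝ,
          Tendsto (fun n : ℕ => ∫ ω, f (∑ i ∈ Finset.range n, X n i ω) ∂μ) atTop
            (nhds (∫ x, f x ∂ν)) := by
  rintro ⟨ν, hν, hconv⟩
  set c : ℝ := 1 - Real.exp (-1) with hc
  have hc0 : 0 < c := by
    have h1 : Real.exp (-1) < 1 := Real.exp_lt_one_iff.mpr (by norm_num)
    linarith
  -- the test function x ↦ exp (-|x|)
  have hcont : Continuous fun x : ℝ => Real.exp (-|x|) := by continuity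
  set f : BoundedContinuousFunction ℝ ℝ :=
    BoundedContinuousFunction.ofNormedAddCommGroup _ hcont 1 (fun x => by
      rw [Real.norm_eq_abs, abs_of_pos (Real.exp_pos _)]
      exact Real.exp_le_one_iff.mpr (neg_nonpos.mpr (abs_nonneg x))) with hf
  have hfapp : ∀ x : ℝ, f x = Real.exp (-|x|) := fun x => rfl
  -- positivity of the limit integral
  have hL : 0 < ∫ x, f x ∂ν := by
    rw [integral_pos_iff_support_of_nonneg
      (fun x => by rw [hfapp]; exact (Real.exp_pos _).le) (f.integrable ν)]
    have : Function.support (fun x => f x) = Set.univ := by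
      ext x; simp [hfapp, Real.exp_ne_zero]
    rw [this]
    simp [hν.measure_univ]
  set L : ℝ := ∫ x, f x ∂ν with hLdef
  -- key bound : E[f(S_n)] ≤ exp (-(c * m_n))
  have key : ∀ n : ℕ, ∫ ω, f (∑ i ∈ Finset.range n, X n i ω) ∂μ ≤
      Real.exp (-(c * ∑ i ∈ Finset.range n, p n i)) := by
    intro n
    -- integrability of X n i
    have hint : ∀ i, Integrable (X n i) μ := by
      intro i
      refine (integrable_const (1 : ℝ)).mono' (hmeas n i).aestronglyMeasurable ?_
      filter_upwards [hval n i] with ω hω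
      rcases hω with h | h <;> simp [h]
    -- E[X n i] ≥ p n i
    have hEX : ∀ i, p n i ≤ ∫ ω, X n i ω ∂μ := by
      intro i
      have hae : (fun ω => X n i ω) =ᵐ[μ] Set.indicator {ω | X n i ω = 1} 1 := by
        filter_upwards [hval n i] with ω hω
        rcases hω with h | h
        · have : ω ∉ {ω | X n i ω = 1} := by simp [Set.mem_setOf_eq, h]
          simp [Set.indicator_apply, this, h]
        · have : ω ∈ {ω | X n i ω = 1} := h
          simp [Set.indicator_apply, this, h]
      rw [integral_congr_ae hae,
        integral_indicator_one (show MeasurableSet {ω | X n i ω = 1} from (hmeas n i) (measurableSet_singleton 1)),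
        measureReal_def, hp n i, ENNReal.toReal_ofReal']
      exact le_max_left _ _
    -- per-variable mgf bound
    have hmgfi : ∀ i, mgf (X n i) μ (-1) ≤ Real.exp (-(c * p n i)) := by
      intro i
      have h1 : mgf (X n i) μ (-1) = ∫ ω, (1 - c * X n i ω) ∂μ := by
        unfold mgf
        refine integral_congr_ae ?_
        filter_upwards [hval n i] with ω hω
        rcases hω with h | h <;> simp [h, hc]
      have h2 : ∫ ω, (1 - c * X n i ω) ∂μ = 1 - c * ∫ ω, X n i ω ∂μ := by
        rw [integral_sub (integrable_const 1) ((hint i).const_mul c),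
          integral_const, integral_const_mul]
        simp
      have h3 : 1 - c * ∫ ω, X n i ω ∂μ ≤ Real.exp (-(c * ∫ ω, X n i ω ∂μ)) := by
        have := Real.add_one_le_exp (-(c * ∫ ω, X n i ω ∂μ))
        linarith
      have h4 : Real.exp (-(c * ∫ ω, X n i ω ∂μ)) ≤ Real.exp (-(c * p n i)) := by
        apply Real.exp_le_exp.mpr
        have := mul_le_mul_of_nonneg_left (hEX i) hc0.le
        linarith
      rw [h1, h2]; exact le_trans h3 h4
    -- S_n on a.e. ω is nonneg; rewrite E[f(S_n)] as mgf
    have hS : ∫ ω, f (∑ i ∈ Finset.range n, X n i ω) ∂μ =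
        mgf (∑ i : Fin n, X n (i : ℕ)) μ (-1) := by
      unfold mgf
      refine integral_congr_ae ?_
      have hall : ∀ᵐ ω ∂μ, ∀ i ∈ Finset.range n, X n i ω = 0 ∨ X n i ω = 1 :=
        (ae_ball_iff (Finset.range n).countable_toSet).mpr fun i _ => hval n i
      filter_upwards [hall] with ω hω
      have hnn : 0 ≤ ∑ i ∈ Finset.range n, X n i ω := by
        apply Finset.sum_nonneg
        intro i hi
        rcases hω i hi with h | h <;> simp [h]
      have hsum : (∑ i : Fin n, X n (i : ℕ)) ω = ∑ i ∈ Finset.range n, X n i ω := by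
        rw [Finset.sum_apply]
        exact Fin.sum_univ_eq_sum_range (fun i => X n i ω) n
      rw [hfapp, hsum, abs_of_nonneg hnn]
      ring_nf
    rw [hS, (hind n).mgf_sum (fun i => hmeas n i) Finset.univ]
    calc ∏ i : Fin n, mgf (X n (i : ℕ)) μ (-1)
        ≤ ∏ i : Fin n, Real.exp (-(c * p n (i : ℕ))) :=
          Finset.prod_le_prod (fun i _ => mgf_nonneg) (fun i _ => hmgfi i)
      _ = Real.exp (∑ i : Fin n, -(c * p n (i : ℕ))) := (Real.exp_sum _ _).symm
      _ = Real.exp (-(c * ∑ i ∈ Finset.range n, p n i)) := by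
          rw [← Fin.sum_univ_eq_sum_range (fun i => p n i) n]
          congr 1
          rw [Finset.mul_sum, ← Finset.sum_neg_distrib]
  -- conclude
  have hev : ∀ᶠ n in atTop, L / 2 < ∫ ω, f (∑ i ∈ Finset.range n, X n i ω) ∂μ :=
    (hconv f).eventually (eventually_gt_nhds (half_lt_self hL))
  set C : ℝ := -Real.log (L / 2) / c with hC
  have hCexp : Real.exp (-(c * C)) = L / 2 := by
    rw [hC]
    rw [mul_div_cancel₀ _ hc0.ne', neg_neg, Real.exp_log (by positivity)]
  obtain ⟨n, hn1, hn2⟩ := ((hm C).and_eventually hev).exists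
  have hlt : ∫ ω, f (∑ i ∈ Finset.range n, X n i ω) ∂μ < L / 2 := by
    calc ∫ ω, f (∑ i ∈ Finset.range n, X n i ω) ∂μ
        ≤ Real.exp (-(c * ∑ i ∈ Finset.range n, p n i)) := key n
      _ < Real.exp (-(c * C)) := by
          apply Real.exp_lt_exp.mpr
          have := mul_lt_mul_of_pos_left hn1 hc0
          linarith
      _ = L / 2 := hCexp
  linarith
end

section
/- Let X_1,…,X_n be independent Bernoulli(p_i) random variables and let W = ∑_{i=1}^n X_i, λ = ∑_{i=1}^n p_i. Then the total variation distance between the law of W and Poisson(λ) is at most 2·∑_{i=1}^n p_i² ≤ 2·(max_i p_i)·λ. -/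
open Finset MeasureTheory ProbabilityTheory

section LeCamAux

noncomputable def poiP (t : ℝ) (k : ℕ) : ℝ := Real.exp (-t) * t ^ k / k.factorial

def bernP (a : ℝ) (k : ℕ) : ℝ := if k = 0 then 1 - a else if k = 1 then a else 0

lemma poiP_nonneg {t : ℝ} (ht : 0 ≤ t) (k : ℕ) : 0 ≤ poiP t k := by
  unfold poiP; positivity

lemma poiP_partial_le_one {t : ℝ} (ht : 0 ≤ t) (M : ℕ) :
    ∑ k ∈ range M, poiP t k ≤ 1 := by
  have h := Real.sum_le_exp_of_nonneg ht M
  have : ∑ k ∈ range M, poiP t k = Real.exp (-t) * ∑ k ∈ range M, t ^ k / k.factorial := by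
    rw [mul_sum]; exact sum_congr rfl fun k _ => by unfold poiP; ring
  rw [this]
  calc Real.exp (-t) * ∑ k ∈ range M, t ^ k / k.factorial
      ≤ Real.exp (-t) * Real.exp t := by
        exact mul_le_mul_of_nonneg_left h (Real.exp_pos _).le
    _ = 1 := by rw [← Real.exp_add]; simp

lemma bernP_nonneg {a : ℝ} (h0 : 0 ≤ a) (h1 : a ≤ 1) (k : ℕ) : 0 ≤ bernP a k := by
  unfold bernP; split_ifs <;> linarith

lemma bernP_partial_le_one {a : ℝ} (h0 : 0 ≤ a) (h1 : a ≤ 1) (M : ℕ) :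
    ∑ k ∈ range M, bernP a k ≤ 1 := by
  match M with
  | 0 => simp
  | 1 => simp [bernP]; linarith
  | (M+2) =>
    have hsub : ({0,1} : Finset ℕ) ⊆ range (M+2) := by
      intro x hx; simp only [mem_insert, mem_singleton] at hx
      rcases hx with rfl | rfl <;> simp [mem_range] <;> omega
    have hz : ∀ x ∈ range (M+2), x ∉ ({0,1} : Finset ℕ) → bernP a x = 0 := by
      intro x _ hx; simp only [mem_insert, mem_singleton, not_or] at hx
      simp [bernP, hx.1, hx.2]
    rw [← Finset.sum_subset hsub hz, Finset.sum_pair (by norm_num : (0:ℕ) ≠ 1)]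
    simp [bernP]

lemma conv_exchange (d c : ℕ → ℝ) (N : ℕ) :
    ∑ k ∈ range N, ∑ j ∈ range (k+1), d j * c (k - j)
      = ∑ j ∈ range N, d j * ∑ m ∈ range (N - j), c m := by
  induction N with
  | zero => simp
  | succ N ih =>
    rw [sum_range_succ, ih]
    have h1 : ∀ j ∈ range N, d j * ∑ m ∈ range (N + 1 - j), c m
        = d j * ∑ m ∈ range (N - j), c m + d j * c (N - j) := by
      intro j hj
      rw [mem_range] at hj
      have h : N + 1 - j = (N - j) + 1 := by omega
      rw [h, sum_range_succ, mul_add]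
    have hR : ∑ j ∈ range (N+1), d j * ∑ m ∈ range (N+1-j), c m
        = (∑ j ∈ range N, d j * ∑ m ∈ range (N-j), c m)
          + ((∑ j ∈ range N, d j * c (N-j)) + d N * c 0) := by
      rw [sum_range_succ, sum_congr rfl h1, sum_add_distrib]
      have h2 : N+1-N = 1 := by omega
      rw [h2, sum_range_one]
      ring
    rw [hR, sum_range_succ, Nat.sub_self]

lemma contr (d c : ℕ → ℝ) (hc : ∀ m, 0 ≤ c m) (hc1 : ∀ M, ∑ m ∈ range M, c m ≤ 1) (N : ℕ) :
    ∑ k ∈ range N, |∑ j ∈ range (k+1), d j * c (k - j)| ≤ ∑ j ∈ range N, |d j| := by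
  calc ∑ k ∈ range N, |∑ j ∈ range (k+1), d j * c (k-j)|
      ≤ ∑ k ∈ range N, ∑ j ∈ range (k+1), |d j| * c (k-j) := by
        refine sum_le_sum fun k _ => (Finset.abs_sum_le_sum_abs _ _).trans ?_
        refine sum_le_sum fun j _ => ?_
        rw [abs_mul, abs_of_nonneg (hc _)]
    _ = ∑ j ∈ range N, |d j| * ∑ m ∈ range (N - j), c m := conv_exchange _ _ _
    _ ≤ ∑ j ∈ range N, |d j| * 1 :=
        sum_le_sum fun j _ => mul_le_mul_of_nonneg_left (hc1 _) (abs_nonneg _)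
    _ = _ := by simp

lemma conv_comm (f g : ℕ → ℝ) (k : ℕ) :
    ∑ j ∈ range (k+1), f j * g (k-j) = ∑ j ∈ range (k+1), g j * f (k-j) := by
  rw [← Finset.sum_range_reflect]
  refine Finset.sum_congr rfl fun j hj => ?_
  rw [mem_range] at hj
  have h1 : k + 1 - 1 - j = k - j := by omega
  have h2 : k - (k - j) = j := by omega
  rw [h1, h2, mul_comm]

lemma poiP_conv (a b : ℝ) (k : ℕ) :
    ∑ j ∈ range (k+1), poiP a j * poiP b (k - j) = poiP (a + b) k := by
  unfold poiP
  rw [neg_add, Real.exp_add, add_pow, mul_sum, Finset.sum_div]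
  refine sum_congr rfl fun j hj => ?_
  rw [mem_range] at hj
  have hjk : j ≤ k := by omega
  have hC : (j.factorial : ℝ) * ((k-j).factorial : ℝ) * (k.choose j : ℝ) = (k.factorial : ℝ) := by
    exact_mod_cast congrArg (Nat.cast : ℕ → ℝ)
      (by rw [← Nat.choose_mul_factorial_mul_factorial hjk]; ring)
  have h1 : (j.factorial : ℝ) ≠ 0 := Nat.cast_ne_zero.2 j.factorial_ne_zero
  have h2 : ((k-j).factorial : ℝ) ≠ 0 := Nat.cast_ne_zero.2 (k-j).factorial_ne_zero
  have h3 : (k.factorial : ℝ) ≠ 0 := Nat.cast_ne_zero.2 k.factorial_ne_zero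
  have h4 : (k.choose j : ℝ) ≠ 0 := Nat.cast_ne_zero.2 (Nat.choose_pos hjk).ne'
  rw [← hC]
  field_simp

lemma bern_tv {a : ℝ} (h0 : 0 ≤ a) (h1 : a ≤ 1) (N : ℕ) :
    ∑ j ∈ range N, |bernP a j - poiP a j| ≤ 2 * a ^ 2 := by
  have key2 : ∀ M, 2 ≤ M → ∑ j ∈ range M, |bernP a j - poiP a j| ≤ 2 * a ^ 2 := by
    intro M hM2
    have hexp1 : 1 - a ≤ Real.exp (-a) := by
      have := Real.add_one_le_exp (-a); linarith
    have hexp2 : Real.exp (-a) ≤ 1 := by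
      calc Real.exp (-a) ≤ Real.exp 0 := Real.exp_le_exp.2 (by linarith)
        _ = 1 := Real.exp_zero
    have hIco : ∑ j ∈ Ico 2 M, |bernP a j - poiP a j| = ∑ j ∈ Ico 2 M, poiP a j := by
      refine sum_congr rfl fun j hj => ?_
      rw [mem_Ico] at hj
      have hb : bernP a j = 0 := by
        unfold bernP; rw [if_neg (by omega), if_neg (by omega)]
      rw [hb, zero_sub, abs_neg, abs_of_nonneg (poiP_nonneg h0 j)]
    have hpoi2 : ∑ j ∈ Ico 2 M, poiP a j ≤ 1 - poiP a 0 - poiP a 1 := by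
      have h := Finset.sum_range_add_sum_Ico (poiP a) hM2
      have h2 := poiP_partial_le_one h0 M
      have h3 : ∑ j ∈ range 2, poiP a j = poiP a 0 + poiP a 1 := by
        simp [sum_range_succ]
      linarith
    have hsplit := Finset.sum_range_add_sum_Ico (fun j => |bernP a j - poiP a j|) hM2
    have h2 : ∑ j ∈ range 2, |bernP a j - poiP a j|
        = |bernP a 0 - poiP a 0| + |bernP a 1 - poiP a 1| := by
      simp [sum_range_succ]
    have e0 : poiP a 0 = Real.exp (-a) := by simp [poiP]
    have e1 : poiP a 1 = Real.exp (-a) * a := by simp [poiP]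
    have b0 : bernP a 0 = 1 - a := rfl
    have b1 : bernP a 1 = a := rfl
    have a0 : |bernP a 0 - poiP a 0| = Real.exp (-a) - (1 - a) := by
      rw [b0, e0, abs_of_nonpos (by linarith)]; ring
    have a1 : |bernP a 1 - poiP a 1| = a - Real.exp (-a) * a := by
      rw [b1, e1, abs_of_nonneg (by nlinarith)]
    nlinarith [mul_le_mul_of_nonneg_left (show 1 - Real.exp (-a) ≤ a by linarith) h0]
  calc ∑ j ∈ range N, |bernP a j - poiP a j|
      ≤ ∑ j ∈ range (max N 2), |bernP a j - poiP a j| :=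
        sum_le_sum_of_subset_of_nonneg (range_subset_range.2 (le_max_left _ _))
          (fun _ _ _ => abs_nonneg _)
    _ ≤ 2 * a ^ 2 := key2 _ (le_max_right _ _)

open MeasureTheory in
lemma prob_partial_le_one {Ω : Type*} [MeasurableSpace Ω] (μ : Measure Ω)
    [IsProbabilityMeasure μ] {W : Ω → ℝ} (hW : Measurable W) (M : ℕ) :
    ∑ k ∈ range M, (μ (W ⁻¹' {(k:ℝ)})).toReal ≤ 1 := by
  have hfin : ∀ k ∈ range M, μ (W ⁻¹' {(k:ℝ)}) ≠ ⊤ := fun k _ => measure_ne_top μ _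
  rw [← ENNReal.toReal_sum hfin]
  have hdisj : Set.PairwiseDisjoint ↑(range M) (fun k : ℕ => W ⁻¹' {(k:ℝ)}) := by
    intro i _ j _ hij
    exact Disjoint.preimage W (Set.disjoint_singleton.2 (by exact_mod_cast hij))
  calc (∑ k ∈ range M, μ (W ⁻¹' {(k:ℝ)})).toReal
      = (μ (⋃ k ∈ range M, W ⁻¹' {(k:ℝ)})).toReal := by
        rw [measure_biUnion_finset hdisj (fun k _ => hW (measurableSet_singleton _))]
    _ ≤ (μ Set.univ).toReal :=
        ENNReal.toReal_mono (measure_ne_top μ _) (measure_mono (Set.subset_univ _))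
    _ = 1 := by simp


lemma key {Ω : Type*} [MeasurableSpace Ω] (μ : Measure Ω) [IsProbabilityMeasure μ]
    {n : ℕ} (X : Fin n → Ω → ℝ) (p : Fin n → ℝ)
    (hp01 : ∀ i, p i ∈ Set.Icc (0:ℝ) 1) (hmeas : ∀ i, Measurable (X i))
    (hval : ∀ i, ∀ᵐ ω ∂μ, X i ω = 0 ∨ X i ω = 1)
    (hp : ∀ i, μ {ω | X i ω = 1} = ENNReal.ofReal (p i))
    (hind : iIndepFun X μ) :
    ∀ s : Finset (Fin n), ∀ N : ℕ,
      ∑ k ∈ range N,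
        |(μ {ω | ∑ i ∈ s, X i ω = (k:ℝ)}).toReal - poiP (∑ i ∈ s, p i) k|
        ≤ 2 * ∑ i ∈ s, (p i)^2 := by
  intro s
  induction s using Finset.induction_on with
  | empty =>
    intro N
    have hz : ∀ k ∈ range N,
        |(μ {ω | ∑ i ∈ (∅ : Finset (Fin n)), X i ω = (k:ℝ)}).toReal - poiP (∑ i ∈ (∅ : Finset (Fin n)), p i) k| = 0 := by
      intro k _
      simp only [Finset.sum_empty]
      match k with
      | 0 =>
        have h1 : {ω : Ω | (0:ℝ) = ((0:ℕ):ℝ)} = Set.univ := by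
          ext ω; simp
        rw [h1]
        simp [poiP]
      | (m+1) =>
        have h1 : {ω : Ω | (0:ℝ) = ((m+1:ℕ):ℝ)} = (∅ : Set Ω) := by
          ext ω
          simp only [Set.mem_setOf_eq, Set.mem_empty_iff_false, iff_false]
          intro h
          have h2 : ((m+1:ℕ):ℝ) = 0 := h.symm
          have h3 : (0:ℝ) ≤ (m:ℝ) := Nat.cast_nonneg m
          push_cast at h2
          linarith
        rw [h1]
        simp [poiP]
    rw [Finset.sum_congr rfl hz]
    simp
  | @insert a s ha ih =>
    intro N
    have hpa0 : 0 ≤ p a := (hp01 a).1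
    have hpa1 : p a ≤ 1 := (hp01 a).2
    have hlam0 : 0 ≤ ∑ i ∈ s, p i := Finset.sum_nonneg fun i _ => (hp01 i).1
    set lam := ∑ i ∈ s, p i with hlam
    set W : Ω → ℝ := fun ω => ∑ i ∈ s, X i ω with hWdef
    have hWmeas : Measurable W := Finset.measurable_sum _ fun i _ => hmeas i
    set q : ℕ → ℝ := fun k => (μ (W ⁻¹' {(k:ℝ)})).toReal with hqdef
    -- independence
    have hInd : IndepFun W (X a) μ := by
      have h := hind.indepFun_finsetSum_of_notMem hmeas ha
      have he : (∑ j ∈ s, X j) = W := by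
        ext ω; simp [hWdef, Finset.sum_apply]
      rwa [he] at h
    have hprod : ∀ S T : Set ℝ, MeasurableSet S → MeasurableSet T →
        μ (X a ⁻¹' S ∩ W ⁻¹' T) = μ (X a ⁻¹' S) * μ (W ⁻¹' T) := by
      intro S T hS hT
      rw [Set.inter_comm, hInd.measure_inter_preimage_eq_mul T S hT hS, mul_comm]
    -- measure of X a = 1 and X a = 0
    have hA1 : μ (X a ⁻¹' {1}) = ENNReal.ofReal (p a) := by
      have h := hp a
      have : X a ⁻¹' {1} = {ω | X a ω = 1} := by ext ω; simp
      rw [this, h]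
    have hdisj01 : Disjoint (X a ⁻¹' {0}) (X a ⁻¹' {1}) :=
      Disjoint.preimage _ (Set.disjoint_singleton.2 (by norm_num))
    have hA0 : μ (X a ⁻¹' {0}) = 1 - ENNReal.ofReal (p a) := by
      have hu : μ (X a ⁻¹' {0} ∪ X a ⁻¹' {1}) = 1 := by
        have hae : (X a ⁻¹' {0} ∪ X a ⁻¹' {1} : Set Ω) =ᵐ[μ] Set.univ := by
          rw [Filter.eventuallyEq_set]
          filter_upwards [hval a] with ω hω
          simp only [Set.mem_union, Set.mem_preimage, Set.mem_singleton_iff, Set.mem_univ,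
            iff_true]
          exact hω
        rw [measure_congr hae, measure_univ]
      rw [measure_union hdisj01 (hmeas a (measurableSet_singleton 1)), hA1] at hu
      exact ENNReal.eq_sub_of_add_eq (by simp) hu
    -- decomposition
    have hdecomp : ∀ r : ℝ, μ {ω | X a ω + W ω = r}
        = μ (X a ⁻¹' {0}) * μ (W ⁻¹' {r}) + μ (X a ⁻¹' {1}) * μ (W ⁻¹' {r - 1}) := by
      intro r
      have hae : {ω | X a ω + W ω = r}
          =ᵐ[μ] ((X a ⁻¹' {0} ∩ W ⁻¹' {r}) ∪ (X a ⁻¹' {1} ∩ W ⁻¹' {r - 1}) : Set Ω) := by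
        rw [Filter.eventuallyEq_set]
        filter_upwards [hval a] with ω hω
        simp only [Set.mem_setOf_eq, Set.mem_union, Set.mem_inter_iff, Set.mem_preimage,
          Set.mem_singleton_iff]
        rcases hω with h | h <;> rw [h] <;>
          constructor <;> intro h2
        · exact Or.inl ⟨rfl, by linarith⟩
        · rcases h2 with ⟨_, h3⟩ | ⟨h3, _⟩
          · linarith
          · norm_num at h3
        · exact Or.inr ⟨rfl, by linarith⟩
        · rcases h2 with ⟨h3, _⟩ | ⟨_, h3⟩
          · norm_num at h3
          · linarith
      rw [measure_congr hae,
        measure_union (hdisj01.mono Set.inter_subset_left Set.inter_subset_left)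
          ((hmeas a (measurableSet_singleton 1)).inter (hWmeas (measurableSet_singleton _))),
        hprod _ _ (measurableSet_singleton 0) (measurableSet_singleton _),
        hprod _ _ (measurableSet_singleton 1) (measurableSet_singleton _)]
    -- the toReal recursion, in convolution form
    have hQ : ∀ k : ℕ, (μ {ω | ∑ i ∈ insert a s, X i ω = (k:ℝ)}).toReal
        = ∑ j ∈ range (k+1), bernP (p a) j * q (k - j) := by
      intro k
      have hsets : {ω | ∑ i ∈ insert a s, X i ω = (k:ℝ)} = {ω | X a ω + W ω = (k:ℝ)} := by
        ext ω; rw [Set.mem_setOf_eq, Set.mem_setOf_eq, Finset.sum_insert ha]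
      rw [hsets, hdecomp]
      rw [ENNReal.toReal_add (by finiteness) (by finiteness), ENNReal.toReal_mul,
        ENNReal.toReal_mul, hA0, hA1]
      have ht0 : (1 - ENNReal.ofReal (p a)).toReal = 1 - p a := by
        rw [ENNReal.toReal_sub_of_le (by simpa using ENNReal.ofReal_le_one.2 hpa1) (by simp)]
        simp [ENNReal.toReal_ofReal hpa0]
      rw [ht0, ENNReal.toReal_ofReal hpa0]
      match k with
      | 0 =>
        have hneg : μ (W ⁻¹' {((0:ℕ):ℝ) - 1}) = 0 := by
          rw [measure_eq_zero_iff_ae_notMem]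
          filter_upwards [ae_all_iff.2 hval] with ω hω
          have hWn : 0 ≤ W ω := Finset.sum_nonneg fun i _ => by
            rcases hω i with h | h <;> rw [h] <;> norm_num
          simp only [Set.mem_preimage, Set.mem_singleton_iff]
          intro h
          norm_num at h
          linarith
        rw [hneg, sum_range_one]
        norm_num [bernP, hqdef]
      | (m+1) =>
        have hsub : ({0,1} : Finset ℕ) ⊆ range (m+2) := by
          intro x hx; simp only [mem_insert, mem_singleton] at hx
          rcases hx with rfl | rfl <;> simp [mem_range]
        have hz : ∀ x ∈ range (m+2), x ∉ ({0,1} : Finset ℕ) → bernP (p a) x * q (m+1-x) = 0 := by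
          intro x _ hx; simp only [mem_insert, mem_singleton, not_or] at hx
          simp [bernP, hx.1, hx.2]
        rw [← Finset.sum_subset hsub hz, Finset.sum_pair (by norm_num : (0:ℕ) ≠ 1)]
        have hc : ((m+1:ℕ):ℝ) - 1 = ((m:ℕ):ℝ) := by push_cast; ring
        rw [hc]
        simp only [bernP, q]
        norm_num
    -- analytic part
    have hsum_ins : ∑ i ∈ insert a s, p i = p a + lam := Finset.sum_insert ha
    have hsq_ins : ∑ i ∈ insert a s, (p i)^2 = (p a)^2 + ∑ i ∈ s, (p i)^2 :=
      Finset.sum_insert ha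
    rw [hsum_ins, hsq_ins]
    have hq_nonneg : ∀ m, 0 ≤ q m := fun m => ENNReal.toReal_nonneg
    have htri : ∀ k ∈ range N,
        |(μ {ω | ∑ i ∈ insert a s, X i ω = (k:ℝ)}).toReal - poiP (p a + lam) k|
        ≤ |∑ j ∈ range (k+1), (q j - poiP lam j) * bernP (p a) (k-j)|
          + |∑ j ∈ range (k+1), (bernP (p a) j - poiP (p a) j) * poiP lam (k-j)| := by
      intro k _
      have e1 : (μ {ω | ∑ i ∈ insert a s, X i ω = (k:ℝ)}).toReal
            - (∑ j ∈ range (k+1), bernP (p a) j * poiP lam (k-j))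
          = ∑ j ∈ range (k+1), (q j - poiP lam j) * bernP (p a) (k-j) := by
        rw [hQ k, conv_comm (bernP (p a)) q k, conv_comm (bernP (p a)) (poiP lam) k,
          ← Finset.sum_sub_distrib]
        exact Finset.sum_congr rfl fun j _ => by ring
      have e2 : (∑ j ∈ range (k+1), bernP (p a) j * poiP lam (k-j)) - poiP (p a + lam) k
          = ∑ j ∈ range (k+1), (bernP (p a) j - poiP (p a) j) * poiP lam (k-j) := by
        rw [← poiP_conv (p a) lam k, ← Finset.sum_sub_distrib]
        exact Finset.sum_congr rfl fun j _ => by ring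
      calc |(μ {ω | ∑ i ∈ insert a s, X i ω = (k:ℝ)}).toReal - poiP (p a + lam) k|
          ≤ |(μ {ω | ∑ i ∈ insert a s, X i ω = (k:ℝ)}).toReal
              - (∑ j ∈ range (k+1), bernP (p a) j * poiP lam (k-j))|
            + |(∑ j ∈ range (k+1), bernP (p a) j * poiP lam (k-j)) - poiP (p a + lam) k| :=
            abs_sub_le _ _ _
        _ = _ := by rw [e1, e2]
    calc ∑ k ∈ range N, |(μ {ω | ∑ i ∈ insert a s, X i ω = (k:ℝ)}).toReal - poiP (p a + lam) k|
        ≤ ∑ k ∈ range N, (|∑ j ∈ range (k+1), (q j - poiP lam j) * bernP (p a) (k-j)|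
            + |∑ j ∈ range (k+1), (bernP (p a) j - poiP (p a) j) * poiP lam (k-j)|) :=
          Finset.sum_le_sum htri
      _ = (∑ k ∈ range N, |∑ j ∈ range (k+1), (q j - poiP lam j) * bernP (p a) (k-j)|)
          + ∑ k ∈ range N, |∑ j ∈ range (k+1), (bernP (p a) j - poiP (p a) j) * poiP lam (k-j)| :=
          Finset.sum_add_distrib
      _ ≤ (∑ j ∈ range N, |q j - poiP lam j|) + ∑ j ∈ range N, |bernP (p a) j - poiP (p a) j| :=
          add_le_add
            (contr _ _ (bernP_nonneg hpa0 hpa1) (bernP_partial_le_one hpa0 hpa1) N)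
            (contr _ _ (poiP_nonneg hlam0) (poiP_partial_le_one hlam0) N)
      _ ≤ 2 * ∑ i ∈ s, (p i)^2 + 2 * (p a)^2 := by
          refine add_le_add ?_ (bern_tv hpa0 hpa1 N)
          have hWeq : ∀ k : ℕ, W ⁻¹' {(k:ℝ)} = {ω | ∑ i ∈ s, X i ω = (k:ℝ)} := by
            intro k
            ext ω
            simp only [Set.mem_preimage, Set.mem_singleton_iff, Set.mem_setOf_eq, hWdef]
          simpa only [hqdef, hWeq] using ih N
      _ = 2 * ((p a)^2 + ∑ i ∈ s, (p i)^2) := by ring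


open MeasureTheory ProbabilityTheory

/-- Le Cam-type Poisson approximation: for `W` a sum of independent Bernoulli(`p i`)
random variables and `λ = ∑ p i`, the total variation distance
`∑_k |P{W = k} - e^{-λ} λ^k / k!|` is at most `2 ∑ p i ² ≤ 2 (max_i p i) λ`. -/
theorem stmt16 {Ω : Type*} [MeasurableSpace Ω] (μ : Measure Ω) [IsProbabilityMeasure μ]
    (n : ℕ) (hn : 0 < n) (X : Fin n → Ω → ℝ) (p : Fin n → ℝ)
    (hp01 : ∀ i, p i ∈ Set.Icc (0 : ℝ) 1)
    (hmeas : ∀ i, Measurable (X i))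
    (hval : ∀ i, ∀ᵐ ω ∂μ, X i ω = 0 ∨ X i ω = 1)
    (hp : ∀ i, μ {ω | X i ω = 1} = ENNReal.ofReal (p i))
    (hind : iIndepFun X μ) :
    (∑' k : ℕ, |(μ {ω | ∑ i, X i ω = (k : ℝ)}).toReal -
        Real.exp (-(∑ i, p i)) * (∑ i, p i) ^ k / (k.factorial : ℝ)| ≤
      2 * ∑ i, (p i) ^ 2) ∧
    2 * ∑ i, (p i) ^ 2 ≤ 2 * (⨆ i, p i) * ∑ i, p i := by
  constructor
  · have hkey := key μ X p hp01 hmeas hval hp hind Finset.univ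
    simp only [poiP] at hkey
    refine tsum_le_of_sum_le' (by positivity) ?_
    intro u
    have hsub : u ⊆ Finset.range (u.sup id + 1) := fun k hk =>
      Finset.mem_range.2 (Nat.lt_succ_of_le (Finset.le_sup (f := id) hk))
    calc ∑ k ∈ u, |(μ {ω | ∑ i, X i ω = (k : ℝ)}).toReal -
            Real.exp (-(∑ i, p i)) * (∑ i, p i) ^ k / (k.factorial : ℝ)|
        ≤ ∑ k ∈ Finset.range (u.sup id + 1), |(μ {ω | ∑ i, X i ω = (k : ℝ)}).toReal -
            Real.exp (-(∑ i, p i)) * (∑ i, p i) ^ k / (k.factorial : ℝ)| :=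
          Finset.sum_le_sum_of_subset_of_nonneg hsub (fun _ _ _ => abs_nonneg _)
      _ ≤ 2 * ∑ i, (p i) ^ 2 := hkey (u.sup id + 1)
  · have hbdd : BddAbove (Set.range p) := (Set.finite_range p).bddAbove
    have hle : ∀ i, p i ≤ ⨆ j, p j := fun i => le_ciSup hbdd i
    have h1 : ∑ i, p i ^ 2 ≤ ∑ i, (⨆ j, p j) * p i :=
      Finset.sum_le_sum fun i _ => by
        rw [sq]
        exact mul_le_mul_of_nonneg_right (hle i) (hp01 i).1
    calc 2 * ∑ i, p i ^ 2 ≤ 2 * ∑ i, (⨆ j, p j) * p i := by linarith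
      _ = 2 * (⨆ i, p i) * ∑ i, p i := by rw [← Finset.mul_sum]; ring
end LeCamAux
end
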